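/- Let n ∈ ℕ and let V ⊆ ℝ^n be a nonempty compact set. For every r ∈ ℕ, C_r^V ⊆ C_{r+1}^V. -/
import Mathlib


noncomputable section

open Filter Topology

/-- The `r`-stack of a `d`-tensor `T`: `Stk^r(T)(u, w) = T(u)`. -/
def stk {α : Type*} (d r : ℕ) (T : (Fin d → α) → ℝ) : (Fin (d + r) → α) → ℝ :=
  fun v => T fun i => v (Fin.castAdd r i)

/-- The symmetrization of a `d`-tensor:
`σ(T)(v) = (1/d!) ∑_{π ∈ Sym(d)} T(v ∘ π)`. -/
def tsym {α : Type*} (d : ℕ) (T : (Fin d → α) → ℝ) : (Fin d → α) → ℝ :=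
  fun v => (d.factorial : ℝ)⁻¹ * ∑ π : Equiv.Perm (Fin d), T (v ∘ π)

/-- A symmetric two-variable function identified with a `2`-tensor. -/
def kerTensor {X : Type*} (K : X → X → ℝ) : (Fin 2 → X) → ℝ :=
  fun v => K (v 0) (v 1)

/-- A kernel: a continuous symmetric real-valued function of two variables. -/
def IsKernel {X : Type*} [TopologicalSpace X] (K : X → X → ℝ) : Prop :=
  Continuous (fun p : X × X => K p.1 p.2) ∧ ∀ x y, K x y = K y x

/-- Positive semidefiniteness of a two-variable function. -/
def IsPSDKernel {X : Type*} (K : X → X → ℝ) : Prop :=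
  ∀ (k : ℕ) (v : Fin k → X) (x : Fin k → ℝ),
    0 ≤ ∑ i, ∑ j, K (v i) (v j) * x i * x j

/-- Copositivity of a two-variable function. -/
def IsCopositiveKernel {X : Type*} (K : X → X → ℝ) : Prop :=
  ∀ (k : ℕ) (v : Fin k → X) (x : Fin k → ℝ), (∀ i, 0 ≤ x i) →
    0 ≤ ∑ i, ∑ j, K (v i) (v j) * x i * x j

/-- An `(r+2)`-tensor `S` is 2-PSD if it is continuous and every slice
`(x, y) ↦ S(x, y, z)` is a PSD kernel. -/
def Is2PSD {X : Type*} [TopologicalSpace X] (r : ℕ)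
    (S : (Fin (2 + r) → X) → ℝ) : Prop :=
  Continuous S ∧ ∀ z : Fin r → X, IsPSDKernel fun x y => S (Fin.append ![x, y] z)

/-- The tensor condition defining `C_r`: `σ(Stk^r M) = σ(N)` for some
nonnegative `(r+2)`-tensor `N`. -/
def CrCond {X : Type*} (r : ℕ) (M : X → X → ℝ) : Prop :=
  ∃ N : (Fin (2 + r) → X) → ℝ, (∀ v, 0 ≤ N v) ∧
    tsym (2 + r) (stk 2 r (kerTensor M)) = tsym (2 + r) N

/-- Membership in `C_r`: a kernel satisfying the `C_r` tensor condition. -/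
def memCr {X : Type*} [TopologicalSpace X] (r : ℕ) (M : X → X → ℝ) : Prop :=
  IsKernel M ∧ CrCond r M

/-- Membership in `Q_r`: a kernel `M` with `σ(Stk^r M) = σ(N) + σ(S)` for some
nonnegative `(r+2)`-tensor `N` and 2-PSD `(r+2)`-tensor `S`. -/
def memQr {X : Type*} [TopologicalSpace X] (r : ℕ) (M : X → X → ℝ) : Prop :=
  IsKernel M ∧ ∃ N S : (Fin (2 + r) → X) → ℝ, (∀ v, 0 ≤ N v) ∧ Is2PSD r S ∧
    tsym (2 + r) (stk 2 r (kerTensor M)) =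
      fun v => tsym (2 + r) N v + tsym (2 + r) S v

/-- The space of kernels on `V`, i.e. symmetric continuous functions on
`V × V`, with the topology of `C(V × V, ℝ)` (for `V` compact this is the
supremum-norm topology). -/
def KernelSpace {n : ℕ} (V : Set (Fin n → ℝ)) : Type _ :=
  {K : C(↥V × ↥V, ℝ) // ∀ x y, K (x, y) = K (y, x)}

instance {n : ℕ} (V : Set (Fin n → ℝ)) : TopologicalSpace (KernelSpace V) :=
  instTopologicalSpaceSubtype

/-- `COP(V)` as a subset of the space of kernels on `V`. -/
def COPSet {n : ℕ} (V : Set (Fin n → ℝ)) : Set (KernelSpace V) :=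
  {K | IsCopositiveKernel fun x y => K.1 (x, y)}

/-- Stacking by `r+1` is stacking by `r` then by `1`. -/
lemma stk_comp {α : Type*} (d r : ℕ) (T : (Fin d → α) → ℝ) :
    stk d (r + 1) T = stk (d + r) 1 (stk d r T) := by
  rfl

lemma sum_perm_stk {α : Type*} (d : ℕ) (T : (Fin d → α) → ℝ)
    (ρ : Equiv.Perm (Fin d)) (v : Fin (d + 1) → α) :
    ∑ π : Equiv.Perm (Fin (d + 1)), T (fun i => v (π (Fin.castAdd 1 (ρ i)))) =
    ∑ π : Equiv.Perm (Fin (d + 1)), T (fun i => v (π (Fin.castAdd 1 i))) := by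
  set e : Equiv.Perm (Fin (d + 1)) :=
    (Equiv.permCongr finSumFinEquiv) (Equiv.sumCongr ρ (Equiv.refl (Fin 1))) with he
  have hkey : ∀ i : Fin d, e (Fin.castAdd 1 i) = Fin.castAdd 1 (ρ i) := by
    intro i
    simp [he, Equiv.permCongr, Equiv.sumCongr]
  calc ∑ π : Equiv.Perm (Fin (d + 1)), T (fun i => v (π (Fin.castAdd 1 (ρ i))))
      = ∑ π : Equiv.Perm (Fin (d + 1)),
          T (fun i => v ((Equiv.mulRight e π) (Fin.castAdd 1 i))) := by
        refine Finset.sum_congr rfl fun π _ => ?_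
        congr 1
        funext i
        simp [Equiv.Perm.mul_apply, hkey i]
    _ = ∑ π : Equiv.Perm (Fin (d + 1)), T (fun i => v (π (Fin.castAdd 1 i))) :=
        Equiv.sum_comp (Equiv.mulRight e)
          (fun π => T (fun i => v (π (Fin.castAdd 1 i))))

/-- Symmetrized stack only depends on the symmetrization. -/
lemma tsym_stk_tsym {α : Type*} (d : ℕ) (T : (Fin d → α) → ℝ) :
    tsym (d + 1) (stk d 1 (tsym d T)) = tsym (d + 1) (stk d 1 T) := by
  funext v
  simp only [tsym, stk, Function.comp_def]
  congr 1
  have hfac : (d.factorial : ℝ) ≠ 0 := Nat.cast_ne_zero.mpr (Nat.factorial_ne_zero d)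
  calc ∑ π : Equiv.Perm (Fin (d + 1)), (d.factorial : ℝ)⁻¹ *
        ∑ ρ : Equiv.Perm (Fin d), T (fun i => v (π (Fin.castAdd 1 (ρ i))))
      = (d.factorial : ℝ)⁻¹ * ∑ ρ : Equiv.Perm (Fin d),
          ∑ π : Equiv.Perm (Fin (d + 1)), T (fun i => v (π (Fin.castAdd 1 (ρ i)))) := by
        rw [← Finset.mul_sum, Finset.sum_comm]
    _ = (d.factorial : ℝ)⁻¹ * ∑ _ρ : Equiv.Perm (Fin d),
          ∑ π : Equiv.Perm (Fin (d + 1)), T (fun i => v (π (Fin.castAdd 1 i))) := by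
        rw [Finset.sum_congr rfl fun ρ _ => sum_perm_stk d T ρ v]
    _ = ∑ π : Equiv.Perm (Fin (d + 1)), T (fun i => v (π (Fin.castAdd 1 i))) := by
        rw [Finset.sum_const, Finset.card_univ, Fintype.card_perm, Fintype.card_fin,
          nsmul_eq_mul, ← mul_assoc, inv_mul_cancel₀ hfac, one_mul]

/-- `C_r^V ⊆ C_{r+1}^V`. -/
theorem stmt3 (n : ℕ) (V : Set (Fin n → ℝ)) (hVne : V.Nonempty)
    (hVc : IsCompact V) (r : ℕ) (M : ↥V → ↥V → ℝ) (hM : memCr r M) :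
    memCr (r + 1) M := by
  obtain ⟨hK, N, hN0, hNeq⟩ := hM
  refine ⟨hK, stk (2 + r) 1 N, fun v => hN0 _, ?_⟩
  show tsym (2 + r + 1) (stk 2 (r + 1) (kerTensor M)) =
    tsym (2 + r + 1) (stk (2 + r) 1 N)
  rw [stk_comp, ← tsym_stk_tsym (2 + r) (stk 2 r (kerTensor M)), hNeq,
    tsym_stk_tsym]
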